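/- For integers k > ℓ ≥ 0 and n > 2k, every n-vertex k-uniform hypergraph H with at least 2·n^{k - 2^{-ℓ}} edges contains a copy of H(k, ℓ) as a subgraph. -/

import Mathlib

/-- Vertex set of the hypergraph H(k, ℓ): two stationary parts A, B of size k-ℓ
and dynamic vertices u₁,…,u_ℓ (left) and v₁,…,v_ℓ (right). -/
abbrev HklVertex (k ℓ : ℕ) := (Fin (k - ℓ) ⊕ Fin (k - ℓ)) ⊕ (Fin ℓ ⊕ Fin ℓ)

/-- The stationary part A of H(k, ℓ). -/
def hklA (k ℓ : ℕ) : Finset (HklVertex k ℓ) :=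
  Finset.univ.image (fun i : Fin (k - ℓ) => Sum.inl (Sum.inl i))

/-- The stationary part B of H(k, ℓ). -/
def hklB (k ℓ : ℕ) : Finset (HklVertex k ℓ) :=
  Finset.univ.image (fun i : Fin (k - ℓ) => Sum.inl (Sum.inr i))

/-- The hypergraph H(k, ℓ): edges are Z ∪ {one of u_i, v_i for each i ≤ ℓ}
with Z ∈ {A, B}. -/
def hkl (k ℓ : ℕ) : Finset (Finset (HklVertex k ℓ)) :=
  Finset.univ.image (fun p : Bool × (Fin ℓ → Bool) =>
    (if p.1 then hklA k ℓ else hklB k ℓ) ∪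
      Finset.univ.image (fun i : Fin ℓ =>
        Sum.inr (if p.2 i then Sum.inl i else Sum.inr i)))

open Finset

section Helpers

variable {α : Type*} [Fintype α] [DecidableEq α]

/-- vertices extending `s` to an edge of `H` -/
def hExt (H : Finset (Finset α)) (s : Finset α) : Finset α :=
  Finset.univ.filter (fun v => v ∉ s ∧ insert v s ∈ H)

/-- common link of `u` and `v`. -/
def hLink (r : ℕ) (H : Finset (Finset α)) (u v : α) : Finset (Finset α) :=
  (Finset.univ.powersetCard r).filter (fun s => u ∈ hExt H s ∧ v ∈ hExt H s)

lemma sum_hExt (k : ℕ) (hk : 1 ≤ k) (H : Finset (Finset α))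
    (hunif : ∀ e ∈ H, e.card = k) :
    ∑ s ∈ Finset.univ.powersetCard (k-1), (hExt H s).card = k * H.card := by
  classical
  rw [← Finset.card_sigma]
  have h3 : ((Finset.univ.powersetCard (k-1)).sigma (fun s => hExt H s)).card
      = (H.sigma (fun e => e)).card := by
    apply Finset.card_bij (fun p _ => (⟨insert p.2 p.1, p.2⟩ : Σ _ : Finset α, α))
    · intro p hp
      simp only [Finset.mem_sigma, Finset.mem_powersetCard, hExt, Finset.mem_filter,
        Finset.mem_univ, true_and] at hp ⊢
      exact ⟨hp.2.2, Finset.mem_insert_self _ _⟩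
    · intro p hp q hq h
      simp only [Finset.mem_sigma, Finset.mem_powersetCard, hExt, Finset.mem_filter,
        Finset.mem_univ, true_and] at hp hq
      obtain ⟨h1, h2⟩ := Sigma.mk.inj_iff.mp h
      have hv : p.2 = q.2 := eq_of_heq h2
      have hs : p.1 = q.1 := by
        have h3 := congrArg (fun s => Finset.erase s q.2) h1
        rw [hv] at hp h3
        rwa [Finset.erase_insert hp.2.1, Finset.erase_insert hq.2.1] at h3
      exact Sigma.ext hs (by rw [hv])
    · rintro ⟨e, v⟩ hev
      simp only [Finset.mem_sigma] at hev
      obtain ⟨he, hv⟩ := hev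
      refine ⟨⟨e.erase v, v⟩, ?_, ?_⟩
      · simp only [Finset.mem_sigma, Finset.mem_powersetCard, hExt, Finset.mem_filter,
          Finset.mem_univ, true_and]
        exact ⟨⟨Finset.subset_univ _, by rw [Finset.card_erase_of_mem hv, hunif e he]⟩,
          Finset.notMem_erase _ _, by rw [Finset.insert_erase hv]; exact he⟩
      · simp [Finset.insert_erase hv]
  rw [h3, Finset.card_sigma]
  rw [Finset.sum_congr rfl (fun e he => hunif e he), Finset.sum_const, smul_eq_mul, mul_comm]

lemma sum_hLink (r : ℕ) (H : Finset (Finset α)) :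
    ∑ p ∈ (Finset.univ : Finset α).offDiag, (hLink r H p.1 p.2).card
      = ∑ s ∈ Finset.univ.powersetCard r,
          ((hExt H s).card * (hExt H s).card - (hExt H s).card) := by
  classical
  have key : ∀ p : α × α, (hLink r H p.1 p.2).card
      = ∑ s ∈ Finset.univ.powersetCard r,
          (if p.1 ∈ hExt H s ∧ p.2 ∈ hExt H s then 1 else 0) := by
    intro p; rw [hLink, Finset.card_filter]
  rw [Finset.sum_congr rfl (fun p _ => key p), Finset.sum_comm]
  refine Finset.sum_congr rfl (fun s _ => ?_)
  rw [← Finset.card_filter]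
  have : (Finset.univ : Finset α).offDiag.filter
      (fun p => p.1 ∈ hExt H s ∧ p.2 ∈ hExt H s) = (hExt H s).offDiag := by
    ext p
    simp only [Finset.mem_filter, Finset.mem_offDiag, Finset.mem_univ, true_and]
    tauto
  rw [this, Finset.offDiag_card]

lemma exists_rich_pair (k : ℕ) (hk : 2 ≤ k) (H : Finset (Finset α))
    (hunif : ∀ e ∈ H, e.card = k) (hn : 2 * k < Fintype.card α)
    (t : ℝ) (ht0 : 0 < t) (ht1 : 2 * t ≤ 1)
    (hcard : 2 * (Fintype.card α : ℝ) ^ ((k : ℝ) - t) ≤ (H.card : ℝ)) :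
    ∃ u v : α, u ≠ v ∧
      2 * (Fintype.card α : ℝ) ^ (((k : ℝ) - 1) - 2 * t) ≤ ((hLink (k-1) H u v).card : ℝ) := by
  classical
  by_contra hcon
  push_neg at hcon
  set n := Fintype.card α with hndef
  have hn5 : 5 ≤ n := by omega
  have hn0 : (0:ℝ) < (n:ℝ) := by exact_mod_cast (by omega : 0 < n)
  have hn1 : (1:ℝ) ≤ (n:ℝ) := by exact_mod_cast Nat.one_le_iff_ne_zero.mpr (by omega)
  set S := (Finset.univ : Finset α).powersetCard (k-1) with hSdef
  set E : ℝ := (n:ℝ) ^ (((k : ℝ) - 1) - 2 * t) with hEdef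
  have hEpos : 0 < E := Real.rpow_pos_of_pos hn0 _
  -- upper bound on the sum of link sizes
  have hoffne : ((Finset.univ : Finset α).offDiag).Nonempty := by
    obtain ⟨a, b, hab⟩ := Fintype.exists_pair_of_one_lt_card (by omega : 1 < n)
    exact ⟨(a, b), by simp [Finset.mem_offDiag, hab]⟩
  have hoffcard : (((Finset.univ : Finset α).offDiag.card : ℕ) : ℝ) ≤ (n:ℝ)^2 := by
    rw [Finset.offDiag_card]
    calc (((Fintype.card α * Fintype.card α - Fintype.card α : ℕ)) : ℝ)
        ≤ ((n * n : ℕ) : ℝ) := by exact_mod_cast Nat.sub_le _ _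
      _ = (n:ℝ)^2 := by push_cast; ring
  have hT : (((∑ p ∈ (Finset.univ : Finset α).offDiag, (hLink (k-1) H p.1 p.2).card : ℕ)) : ℝ)
      < (n:ℝ)^2 * (2 * E) := by
    push_cast
    calc ∑ p ∈ (Finset.univ : Finset α).offDiag, ((hLink (k-1) H p.1 p.2).card : ℝ)
        < ∑ _p ∈ (Finset.univ : Finset α).offDiag, 2 * E := by
          apply Finset.sum_lt_sum_of_nonempty hoffne
          intro p hp
          have hne : p.1 ≠ p.2 := (Finset.mem_offDiag.mp hp).2.2
          exact hcon p.1 p.2 hne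
      _ = ((Finset.univ : Finset α).offDiag.card : ℝ) * (2 * E) := by
          rw [Finset.sum_const, nsmul_eq_mul]
      _ ≤ (n:ℝ)^2 * (2 * E) := by
          apply mul_le_mul_of_nonneg_right hoffcard (by positivity)
  -- lower bound
  have hmm : ∀ m : ℕ, m ≤ m * m := fun m => by
    cases m with
    | zero => simp
    | succ p => exact Nat.le_mul_of_pos_left _ (Nat.succ_pos p)
  have hVal : (((∑ p ∈ (Finset.univ : Finset α).offDiag, (hLink (k-1) H p.1 p.2).card : ℕ)) : ℝ)
      = (∑ s ∈ S, ((hExt H s).card : ℝ)^2) - ∑ s ∈ S, ((hExt H s).card : ℝ) := by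
    rw [sum_hLink]
    rw [← Finset.sum_sub_distrib]
    push_cast [Nat.cast_sub (hmm _)]
    exact Finset.sum_congr rfl (fun s _ => by push_cast [Nat.cast_sub (hmm _)]; ring)
  set D : ℝ := ∑ s ∈ S, ((hExt H s).card : ℝ) with hDdef
  set Q : ℝ := ∑ s ∈ S, ((hExt H s).card : ℝ)^2 with hQdef
  have hQ0 : 0 ≤ Q := Finset.sum_nonneg (fun s _ => by positivity)
  have hD0 : 0 ≤ D := Finset.sum_nonneg (fun s _ => by positivity)
  have hDm : D = (k : ℝ) * (H.card : ℝ) := by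
    rw [hDdef, ← Nat.cast_sum]
    exact_mod_cast congrArg (Nat.cast : ℕ → ℝ) (sum_hExt k (by omega) H hunif)
  -- choose bound : |S| ≤ n^(k-1)
  have hchoose : ∀ r : ℕ, (n.choose r) ≤ n ^ r := fun r =>
    le_trans (Nat.le_mul_of_pos_left _ (Nat.factorial_pos r))
      (by rw [← Nat.descFactorial_eq_factorial_mul_choose]; exact Nat.descFactorial_le_pow _ _)
  have hScard : ((S.card : ℕ) : ℝ) ≤ (n:ℝ)^(k-1) := by
    rw [hSdef, Finset.card_powersetCard, Finset.card_univ]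
    exact_mod_cast hchoose (k-1)
  have hCS : D^2 ≤ (n:ℝ)^(k-1) * Q := by
    calc D^2 ≤ (S.card : ℝ) * Q := by
          have := sq_sum_le_card_mul_sum_sq (s := S)
            (f := fun s => ((hExt H s).card : ℝ))
          simpa using this
      _ ≤ (n:ℝ)^(k-1) * Q := mul_le_mul_of_nonneg_right hScard hQ0
  -- D ≤ n^k
  have hHcard : H.card ≤ n.choose k := by
    have : H ⊆ Finset.univ.powersetCard k := fun e he =>
      Finset.mem_powersetCard.mpr ⟨Finset.subset_univ _, hunif e he⟩
    calc H.card ≤ (Finset.univ.powersetCard k).card := Finset.card_le_card this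
      _ = n.choose k := by rw [Finset.card_powersetCard, Finset.card_univ]
  have hDnk : D ≤ (n:ℝ)^k := by
    rw [hDm]
    have : k * H.card ≤ n ^ k := by
      calc k * H.card ≤ k * n.choose k := Nat.mul_le_mul_left _ hHcard
        _ ≤ k.factorial * n.choose k := Nat.mul_le_mul_right _ (Nat.self_le_factorial k)
        _ = n.descFactorial k := (Nat.descFactorial_eq_factorial_mul_choose _ _).symm
        _ ≤ n ^ k := Nat.descFactorial_le_pow _ _
    exact_mod_cast this
  -- main estimate
  set X : ℝ := (n:ℝ) ^ ((k:ℝ) - t) with hXdef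
  have hX0 : 0 < X := Real.rpow_pos_of_pos hn0 _
  have hDX : 2 * X ≤ D := by
    rw [hDm]
    calc 2 * X ≤ (H.card : ℝ) := hcard
      _ ≤ (k:ℝ) * H.card := le_mul_of_one_le_left (by positivity) (by exact_mod_cast hk.trans' (by norm_num))
  have hP : (0:ℝ) < (n:ℝ)^(k-1) := by positivity
  -- convert nat powers to rpow
  have hnk_rpow : (n:ℝ)^k = (n:ℝ) ^ ((k:ℕ):ℝ) := (Real.rpow_natCast _ _).symm
  have hnk1_rpow : (n:ℝ)^(k-1) = (n:ℝ) ^ ((k:ℝ) - 1) := by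
    rw [← Real.rpow_natCast (n:ℝ) (k-1)]
    congr 1
    push_cast [Nat.cast_sub (by omega : 1 ≤ k)]
    ring
  have hXX : X * X = (n:ℝ) ^ (2*(k:ℝ) - 2*t) := by
    rw [hXdef, ← Real.rpow_add hn0]; ring_nf
  have hkP : (n:ℝ)^k * (n:ℝ)^(k-1) ≤ X * X := by
    rw [hXX, hnk_rpow, hnk1_rpow, ← Real.rpow_add hn0]
    exact Real.rpow_le_rpow_of_exponent_le hn1 (by push_cast; linarith)
  have hEP : (n:ℝ)^2 * (2 * E) * (n:ℝ)^(k-1) = 2 * (X * X) := by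
    have h2 : (n:ℝ)^2 = (n:ℝ) ^ ((2:ℝ)) := by
      rw [← Real.rpow_natCast (n:ℝ) 2]; norm_num
    rw [hXX, hEdef, hnk1_rpow, h2,
      show ∀ a b c : ℝ, (n:ℝ)^a * (2*(n:ℝ)^b) * (n:ℝ)^c = 2*((n:ℝ)^a*(n:ℝ)^b*(n:ℝ)^c)
        from fun a b c => by ring,
      ← Real.rpow_add hn0, ← Real.rpow_add hn0]
    ring_nf
  -- combine
  have e1 : D^2 ≤ Q * (n:ℝ)^(k-1) := by rw [mul_comm]; exact hCS
  have e2 : D * (n:ℝ)^(k-1) ≤ (n:ℝ)^k * (n:ℝ)^(k-1) :=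
    mul_le_mul_of_nonneg_right hDnk hP.le
  have hlow : D^2 - (n:ℝ)^k * (n:ℝ)^(k-1) ≤ (Q - D) * (n:ℝ)^(k-1) := by
    have : (Q - D) * (n:ℝ)^(k-1) = Q * (n:ℝ)^(k-1) - D * (n:ℝ)^(k-1) := by ring
    linarith [e1, e2, this.ge, this.le]
  have h5 : Q - D < (n:ℝ)^2 * (2*E) := by rw [hVal] at hT; exact hT
  have hhigh : (Q - D) * (n:ℝ)^(k-1) < 2 * (X * X) := by
    rw [← hEP]
    exact mul_lt_mul_of_pos_right h5 hP
  have hD2 : 4 * (X * X) ≤ D^2 := by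
    have := mul_le_mul hDX hDX (by positivity) (le_trans (by positivity) hDX)
    calc 4 * (X*X) = (2*X)*(2*X) := by ring
      _ ≤ D * D := this
      _ = D^2 := (sq D).symm
  have hXXpos : 0 < X * X := mul_pos hX0 hX0
  linarith [hlow, hhigh, hkP, hD2, hXXpos]

lemma exists_disjoint_edges (k : ℕ) (hk : 0 < k) (H : Finset (Finset α))
    (hunif : ∀ e ∈ H, e.card = k) (hn : 2 * k < Fintype.card α)
    (hcard : 2 * (Fintype.card α : ℝ) ^ ((k : ℝ) - 1) ≤ (H.card : ℝ)) :
    ∃ e₁ ∈ H, ∃ e₂ ∈ H, Disjoint e₁ e₂ := by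
  classical
  by_contra hcon
  push_neg at hcon
  set n := Fintype.card α with hndef
  have hn0 : (0:ℝ) < (n:ℝ) := by exact_mod_cast (by omega : 0 < n)
  have hnk1_rpow : ((n:ℝ))^((k:ℝ)-1) = ((n^(k-1) : ℕ) : ℝ) := by
    push_cast
    rw [← Real.rpow_natCast (n:ℝ) (k-1)]
    congr 1
    push_cast [Nat.cast_sub (by omega : 1 ≤ k)]
    ring
  have hnat : 2 * n^(k-1) ≤ H.card := by
    rw [hnk1_rpow] at hcard
    exact_mod_cast hcard
  have hne : H.Nonempty := by
    rw [← Finset.card_pos]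
    have hp : 0 < n^(k-1) := Nat.pow_pos (by omega)
    omega
  obtain ⟨e, he⟩ := hne
  have hsub : H ⊆ e.biUnion (fun v => H.filter (fun f => v ∈ f)) := by
    intro f hf
    have hnd := hcon e he f hf
    rw [Finset.not_disjoint_iff] at hnd
    obtain ⟨v, hv1, hv2⟩ := hnd
    exact Finset.mem_biUnion.mpr ⟨v, hv1, Finset.mem_filter.mpr ⟨hf, hv2⟩⟩
  have h2 : ∀ v : α, (H.filter (fun f => v ∈ f)).card ≤ (n-1).choose (k-1) := by
    intro v
    have hle : (H.filter (fun f => v ∈ f)).card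
        ≤ ((Finset.univ.erase v).powersetCard (k-1)).card := by
      apply Finset.card_le_card_of_injOn (fun f => f.erase v)
      · intro f hf
        rw [Finset.mem_coe, Finset.mem_filter] at hf
        rw [Finset.mem_coe, Finset.mem_powersetCard]
        exact ⟨Finset.erase_subset_erase v (Finset.subset_univ f),
          by rw [Finset.card_erase_of_mem hf.2, hunif f hf.1]⟩
      · intro f hf g hg hfg
        simp only [Finset.coe_filter, Set.mem_setOf_eq] at hf hg
        simp only at hfg
        rw [← Finset.insert_erase hf.2, ← Finset.insert_erase hg.2, hfg]
    rwa [Finset.card_powersetCard, Finset.card_erase_of_mem (Finset.mem_univ v),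
      Finset.card_univ] at hle
  have h3 : H.card ≤ k * ((n-1).choose (k-1)) := by
    calc H.card ≤ (e.biUnion (fun v => H.filter (fun f => v ∈ f))).card :=
          Finset.card_le_card hsub
      _ ≤ ∑ v ∈ e, (H.filter (fun f => v ∈ f)).card := Finset.card_biUnion_le
      _ ≤ ∑ _v ∈ e, (n-1).choose (k-1) := Finset.sum_le_sum (fun v _ => h2 v)
      _ = k * ((n-1).choose (k-1)) := by
          rw [Finset.sum_const, smul_eq_mul, hunif e he]
  have h4 : k * ((n-1).choose (k-1)) < 2 * n^(k-1) := by
    rcases Nat.eq_or_lt_of_le hk with hk1 | hk2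
    · simp [← hk1]
    · -- k ≥ 2
      have hfpos : 0 < (k-1).factorial := Nat.factorial_pos _
      apply Nat.lt_of_mul_lt_mul_right (a := (k-1).factorial)
      calc k * ((n-1).choose (k-1)) * (k-1).factorial
          = k * ((k-1).factorial * ((n-1).choose (k-1))) := by ring
        _ = k * ((n-1).descFactorial (k-1)) := by
            rw [← Nat.descFactorial_eq_factorial_mul_choose]
        _ ≤ k * (n-1)^(k-1) := Nat.mul_le_mul_left _ (Nat.descFactorial_le_pow _ _)
        _ ≤ (2 * (k-1).factorial) * (n-1)^(k-1) := by
            apply Nat.mul_le_mul_right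
            calc k ≤ 2*(k-1) := by omega
              _ ≤ 2*(k-1).factorial := Nat.mul_le_mul_left _ (Nat.self_le_factorial _)
        _ < (2 * (k-1).factorial) * n^(k-1) := by
            have := Nat.pow_lt_pow_left (a := n-1) (b := n) (by omega) (n := k-1) (by omega)
            exact Nat.mul_lt_mul_of_le_of_lt (le_refl _) this
              (by positivity)
        _ = 2 * n^(k-1) * (k-1).factorial := by ring
  exact absurd hnat (not_le.mpr (lt_of_le_of_lt h3 h4))

lemma image_fin_emb (s : Finset α) {k : ℕ} (h : s.card = k) :
    Finset.univ.image (fun i : Fin k => ((s.equivFin.symm (Fin.cast h.symm i)) : α)) = s := by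
  ext a
  simp only [Finset.mem_image, Finset.mem_univ, true_and]
  constructor
  · rintro ⟨i, rfl⟩; exact Finset.coe_mem _
  · intro ha
    exact ⟨Fin.cast h (s.equivFin ⟨a, ha⟩), by simp⟩

end Helpers

def edgeMap (k ℓ : ℕ) (p : Bool × (Fin ℓ → Bool)) : Finset (HklVertex k ℓ) :=
  (if p.1 then hklA k ℓ else hklB k ℓ) ∪
    Finset.univ.image (fun i : Fin ℓ =>
      Sum.inr (if p.2 i then Sum.inl i else Sum.inr i))

lemma hkl_eq (k ℓ : ℕ) : hkl k ℓ = Finset.univ.image (edgeMap k ℓ) := rfl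

lemma edgeMap_mem (k ℓ : ℕ) (p : Bool × (Fin ℓ → Bool)) : edgeMap k ℓ p ∈ hkl k ℓ := by
  rw [hkl_eq]; exact Finset.mem_image_of_mem _ (Finset.mem_univ _)

lemma exists_edge_containing (k ℓ : ℕ) (x : HklVertex k ℓ) : ∃ e ∈ hkl k ℓ, x ∈ e := by
  rcases x with (i|i)|(i|i)
  · refine ⟨edgeMap k ℓ (true, fun _ => true), edgeMap_mem _ _ _, ?_⟩
    apply Finset.mem_union_left
    simp [hklA]
  · refine ⟨edgeMap k ℓ (false, fun _ => true), edgeMap_mem _ _ _, ?_⟩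
    apply Finset.mem_union_left
    simp [hklB]
  · refine ⟨edgeMap k ℓ (true, fun _ => true), edgeMap_mem _ _ _, ?_⟩
    apply Finset.mem_union_right
    simp
  · refine ⟨edgeMap k ℓ (true, fun _ => false), edgeMap_mem _ _ _, ?_⟩
    apply Finset.mem_union_right
    simp

lemma image_univ_fin_cast {a b : ℕ} (h : a = b) :
    (Finset.univ : Finset (Fin a)).image (Fin.cast h) = Finset.univ := by
  subst h
  simp [Fin.cast_refl]

section Main

variable {α : Type*} [Fintype α] [DecidableEq α]

lemma main_lemma {α : Type*} [Fintype α] [DecidableEq α] (ℓ : ℕ) :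
    ∀ (k : ℕ), ℓ < k → 2 * k < Fintype.card α →
    ∀ H : Finset (Finset α), (∀ e ∈ H, e.card = k) →
    2 * (Fintype.card α : ℝ) ^ ((k : ℝ) - (2:ℝ) ^ (-(ℓ:ℝ))) ≤ (H.card : ℝ) →
    ∃ f : HklVertex k ℓ → α, Function.Injective f ∧ ∀ e ∈ hkl k ℓ, e.image f ∈ H := by
  induction ℓ with
  | zero =>
    intro k hℓk hn H hunif hcard
    have hcard' : 2 * (Fintype.card α : ℝ) ^ ((k : ℝ) - 1) ≤ (H.card : ℝ) := by
      simpa using hcard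
    obtain ⟨e₁, he₁, e₂, he₂, hdisj⟩ :=
      exists_disjoint_edges k (by omega) H hunif hn hcard'
    have h1 : e₁.card = k - 0 := by rw [Nat.sub_zero]; exact hunif _ he₁
    have h2 : e₂.card = k - 0 := by rw [Nat.sub_zero]; exact hunif _ he₂
    set F : HklVertex k 0 → α := Sum.elim (Sum.elim
        (fun i : Fin (k-0) => ((e₁.equivFin.symm (Fin.cast h1.symm i)) : α))
        (fun i : Fin (k-0) => ((e₂.equivFin.symm (Fin.cast h2.symm i)) : α)))
      (Sum.elim (fun i : Fin 0 => i.elim0) (fun i : Fin 0 => i.elim0)) with hF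
    refine ⟨F, ?_, ?_⟩
    · intro x y hxy
      rcases x with (i|i)|(i|i) <;> rcases y with (j|j)|(j|j) <;>
        first
          | exact i.elim0
          | exact j.elim0
          | skip
      all_goals simp only [hF, Sum.elim_inl, Sum.elim_inr] at hxy
      · have h' : i = j := by
          have := e₁.equivFin.symm.injective (Subtype.val_injective hxy)
          simpa [Fin.ext_iff] using congrArg Fin.val this
        rw [h']
      · exfalso
        have ha := Finset.coe_mem (e₁.equivFin.symm (Fin.cast h1.symm i))
        have hb := Finset.coe_mem (e₂.equivFin.symm (Fin.cast h2.symm j))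
        rw [← hxy] at hb
        exact Finset.disjoint_left.mp hdisj ha hb
      · exfalso
        have ha := Finset.coe_mem (e₂.equivFin.symm (Fin.cast h2.symm i))
        have hb := Finset.coe_mem (e₁.equivFin.symm (Fin.cast h1.symm j))
        rw [← hxy] at hb
        exact Finset.disjoint_left.mp hdisj hb ha
      · have h' : i = j := by
          have := e₂.equivFin.symm.injective (Subtype.val_injective hxy)
          simpa [Fin.ext_iff] using congrArg Fin.val this
        rw [h']
    · intro e he
      rw [hkl_eq] at he
      obtain ⟨p, _, rfl⟩ := Finset.mem_image.mp he
      have hempty : (Finset.univ : Finset (Fin 0)).image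
          (fun i : Fin 0 => (Sum.inr (if p.2 i then Sum.inl i else Sum.inr i) : HklVertex k 0)) = ∅ := by
        simp
      have hA : (hklA k 0).image F = e₁ := by
        rw [hklA, Finset.image_image, hF]
        exact image_fin_emb e₁ h1
      have hB : (hklB k 0).image F = e₂ := by
        rw [hklB, Finset.image_image, hF]
        exact image_fin_emb e₂ h2
      rcases p with ⟨b, g⟩
      cases b
      · simp only [edgeMap, Bool.false_eq_true, if_false, hempty, Finset.union_empty]
        rw [hB]; exact he₂
      · simp only [edgeMap, if_true, hempty, Finset.union_empty]
        rw [hA]; exact he₁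
  | succ ℓ ih =>
    intro k hℓk hn H hunif hcard
    have hk2 : 2 ≤ k := by omega
    set t : ℝ := (2:ℝ) ^ (-((ℓ+1 : ℕ):ℝ)) with htdef
    have ht0 : 0 < t := Real.rpow_pos_of_pos two_pos _
    have h2t : 2 * t = (2:ℝ) ^ (-(ℓ:ℝ)) := by
      rw [htdef]
      calc (2:ℝ) * (2:ℝ) ^ (-((ℓ+1 : ℕ):ℝ))
          = (2:ℝ)^(1:ℝ) * (2:ℝ) ^ (-((ℓ+1 : ℕ):ℝ)) := by rw [Real.rpow_one]
        _ = (2:ℝ) ^ ((1:ℝ) + -((ℓ+1 : ℕ):ℝ)) := (Real.rpow_add two_pos _ _).symm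
        _ = (2:ℝ) ^ (-(ℓ:ℝ)) := by congr 1; push_cast; ring
    have ht1 : 2 * t ≤ 1 := by
      rw [h2t]
      exact Real.rpow_le_one_of_one_le_of_nonpos one_le_two (by simp)
    have hcard' : 2 * (Fintype.card α : ℝ) ^ ((k : ℝ) - t) ≤ (H.card : ℝ) := hcard
    obtain ⟨u, v, huv, hlink⟩ := exists_rich_pair k hk2 H hunif hn t ht0 ht1 hcard'
    set H' := hLink (k-1) H u v with hH'def
    have hunif' : ∀ e ∈ H', e.card = k-1 := by
      intro e he'
      rw [hH'def, hLink, Finset.mem_filter, Finset.mem_powersetCard] at he'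
      exact he'.1.2
    have hsafe : ∀ s ∈ H', u ∉ s ∧ v ∉ s ∧ insert u s ∈ H ∧ insert v s ∈ H := by
      intro s hs
      rw [hH'def, hLink, Finset.mem_filter] at hs
      have h1 := hs.2.1; have h2 := hs.2.2
      rw [hExt, Finset.mem_filter] at h1 h2
      exact ⟨h1.2.1, h2.2.1, h1.2.2, h2.2.2⟩
    have hcard'' : 2 * (Fintype.card α : ℝ) ^ (((k-1 : ℕ) : ℝ) - (2:ℝ)^(-(ℓ:ℝ))) ≤ (H'.card : ℝ) := by
      rw [← h2t]
      have hcast : ((k-1:ℕ):ℝ) = (k:ℝ) - 1 := by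
        push_cast [Nat.cast_sub (by omega : 1 ≤ k)]; ring
      rw [hcast]
      exact hlink
    obtain ⟨f', hinj', hmem'⟩ := ih (k-1) (by omega) (by omega) H' hunif' hcard''
    have hfu : ∀ z, f' z ≠ u := by
      intro z hz
      obtain ⟨e₀, he₀, hze₀⟩ := exists_edge_containing (k-1) ℓ z
      exact (hsafe _ (hmem' e₀ he₀)).1 (hz ▸ Finset.mem_image_of_mem f' hze₀)
    have hfv : ∀ z, f' z ≠ v := by
      intro z hz
      obtain ⟨e₀, he₀, hze₀⟩ := exists_edge_containing (k-1) ℓ z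
      exact (hsafe _ (hmem' e₀ he₀)).2.1 (hz ▸ Finset.mem_image_of_mem f' hze₀)
    have hc : k - (ℓ+1) = (k-1) - ℓ := by omega
    set F : HklVertex k (ℓ+1) → α := Sum.elim (Sum.elim
        (fun i => f' (Sum.inl (Sum.inl (Fin.cast hc i))))
        (fun i => f' (Sum.inl (Sum.inr (Fin.cast hc i)))))
      (Sum.elim
        (fun i : Fin (ℓ+1) => if h : (i:ℕ) < ℓ then f' (Sum.inr (Sum.inl ⟨i, h⟩)) else u)
        (fun i : Fin (ℓ+1) => if h : (i:ℕ) < ℓ then f' (Sum.inr (Sum.inr ⟨i, h⟩)) else v)) with hF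
    refine ⟨F, ?_, ?_⟩
    · intro x y hxy
      rcases x with (i|i)|(i|i) <;> rcases y with (j|j)|(j|j) <;>
        simp only [hF, Sum.elim_inl, Sum.elim_inr] at hxy <;>
        (try split_ifs at hxy) <;>
        first
          | exact absurd hxy (hfu _)
          | exact absurd hxy.symm (hfu _)
          | exact absurd hxy (hfv _)
          | exact absurd hxy.symm (hfv _)
          | exact absurd hxy huv
          | exact absurd hxy.symm huv
          | exact ((by simpa using hinj' hxy : False)).elim
          | (have h2 := hinj' hxy
             simp only [Sum.inl.injEq, Sum.inr.injEq, Fin.mk.injEq, Fin.ext_iff,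
               Fin.coe_cast] at h2 ⊢
             omega)
          | (have hi' := i.isLt
             have hj' := j.isLt
             simp only [Sum.inr.injEq, Sum.inl.injEq, Fin.ext_iff]
             omega)
    · intro e he
      rw [hkl_eq] at he
      obtain ⟨p, _, rfl⟩ := Finset.mem_image.mp he
      rcases p with ⟨b, g⟩
      set e' : Finset (HklVertex (k-1) ℓ) := edgeMap (k-1) ℓ (b, fun j => g j.castSucc) with he'def
      have he' : e' ∈ hkl (k-1) ℓ := edgeMap_mem _ _ _
      have hse := hsafe _ (hmem' e' he')
      have hZ : ((if b then hklA k (ℓ+1) else hklB k (ℓ+1))).image F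
          = ((if b then hklA (k-1) ℓ else hklB (k-1) ℓ)).image f' := by
        cases b
        · simp only [Bool.false_eq_true, if_false]
          rw [hklB, Finset.image_image, hklB, Finset.image_image,
            ← image_univ_fin_cast hc, Finset.image_image]
          exact Finset.image_congr (fun i _ => by simp [hF])
        · simp only [if_true]
          rw [hklA, Finset.image_image, hklA, Finset.image_image,
            ← image_univ_fin_cast hc, Finset.image_image]
          exact Finset.image_congr (fun i _ => by simp [hF])
      have hsplit : (Finset.univ : Finset (Fin (ℓ+1)))
          = insert (Fin.last ℓ) ((Finset.univ : Finset (Fin ℓ)).image Fin.castSucc) := by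
        ext i
        simp only [Finset.mem_univ, true_iff, Finset.mem_insert, Finset.mem_image]
        rcases Fin.eq_castSucc_or_eq_last i with ⟨j, rfl⟩ | rfl
        · exact Or.inr ⟨j, by simp⟩
        · exact Or.inl rfl
      have hDlast : F (Sum.inr (if g (Fin.last ℓ) then Sum.inl (Fin.last ℓ)
            else Sum.inr (Fin.last ℓ))) = (if g (Fin.last ℓ) then u else v) := by
        cases hgl : g (Fin.last ℓ) <;> simp [hF, hgl]
      have hDrest : ∀ j : Fin ℓ,
          F (Sum.inr (if g j.castSucc then Sum.inl j.castSucc else Sum.inr j.castSucc))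
            = f' (Sum.inr (if g j.castSucc then Sum.inl j else Sum.inr j)) := by
        intro j
        cases hgj : g j.castSucc <;>
          simp [hF, hgj, Fin.coe_castSucc, j.isLt, Fin.eta]
      have hkey : (edgeMap k (ℓ+1) (b, g)).image F
          = insert (if g (Fin.last ℓ) then u else v) (e'.image f') := by
        rw [edgeMap, Finset.image_union, hZ, he'def, edgeMap]
        dsimp only
        rw [Finset.image_union, hsplit, Finset.image_insert, Finset.image_image,
          Finset.image_image]
        rw [Finset.image_insert, Finset.image_image]
        rw [Finset.union_insert, hDlast]
        congr 2
        exact Finset.image_congr (fun j _ => hDrest j)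
      rw [hkey]
      rcases hse with ⟨-, -, hseu, hsev⟩
      cases hgl : g (Fin.last ℓ)
      · simpa [hgl] using hsev
      · simpa [hgl] using hseu


end Main

theorem stmt_7 {α : Type*} [Fintype α] [DecidableEq α] (k ℓ : ℕ) (hℓk : ℓ < k)
    (hn : 2 * k < Fintype.card α)
    (H : Finset (Finset α)) (hunif : ∀ e ∈ H, e.card = k)
    (hcard : 2 * (Fintype.card α : ℝ) ^ ((k : ℝ) - (2 : ℝ) ^ (-(ℓ : ℝ))) ≤ (H.card : ℝ)) :
    ∃ f : HklVertex k ℓ → α, Function.Injective f ∧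
      ∀ e ∈ hkl k ℓ, e.image f ∈ H := by
  exact main_lemma ℓ k hℓk hn H hunif hcard
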